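/- arXiv:1805.05483 — 2 statements merged into one kernel-verified Lean document; each statement's English description precedes it below -/
import Mathlib

section
/- Let G be a finite simple graph of order n with at least one edge and adjacency matrix A, let k ≥ 2 be an integer, and let p, q > 1 be real numbers with 1/p + 1/q = 1. Then for every vertex v_j, ((|A|^k)_{jj})^q / ((|A|^{p(k−1)+1})_{jj})^{q/p} ≤ E_G(v_j), where |A|^s denotes the s-th power of |A| (defined via the functional calculus for real exponents s). -/
open Matrix Finset

open scoped ComplexOrder

/-- The positive semidefinite square root of a positive semidefinite matrix (the definition
`Matrix.PosSemidef.sqrt` of the older Mathlib, removed since). -/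
noncomputable def Matrix.PosSemidef.sqrt {n 𝕜 : Type*} [Fintype n] [DecidableEq n] [RCLike 𝕜]
    {A : Matrix n n 𝕜} (hA : A.PosSemidef) : Matrix n n 𝕜 :=
  hA.1.eigenvectorUnitary.1 * diagonal ((↑) ∘ (√·) ∘ hA.1.eigenvalues) *
    (star hA.1.eigenvectorUnitary : Matrix n n 𝕜)

theorem Matrix.PosSemidef.posSemidef_sqrt {n 𝕜 : Type*} [Fintype n] [DecidableEq n] [RCLike 𝕜]
    {A : Matrix n n 𝕜} (hA : A.PosSemidef) : hA.sqrt.PosSemidef := by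
  unfold Matrix.PosSemidef.sqrt
  rw [Matrix.star_eq_conjTranspose]
  apply PosSemidef.mul_mul_conjTranspose_same
  refine posSemidef_diagonal_iff.mpr fun i ↦ ?_
  rw [Function.comp_apply, RCLike.nonneg_iff]
  constructor
  · simp only [Function.comp_apply, RCLike.ofReal_re]
    exact Real.sqrt_nonneg _
  · simp only [Function.comp_apply, RCLike.ofReal_im]

/-- The energy of the vertex `i` of a finite simple graph `G`:
the `(i,i)` entry of `|A| = (A Aᴴ)^{1/2}`, where `A` is the adjacency matrix. -/
noncomputable def vertexEnergy {n : ℕ} (G : SimpleGraph (Fin n)) [DecidableRel G.Adj]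
    (i : Fin n) : ℝ :=
  (Matrix.posSemidef_self_mul_conjTranspose (G.adjMatrix ℝ)).sqrt i i

/-- Real powers of a positive semidefinite real matrix, via the functional calculus:
apply `x ↦ x ^ s` to the eigenvalues in a spectral decomposition. -/
noncomputable def psdRPow {n : ℕ} {B : Matrix (Fin n) (Fin n) ℝ} (hB : B.PosSemidef)
    (s : ℝ) : Matrix (Fin n) (Fin n) ℝ :=
  (hB.1.eigenvectorUnitary : Matrix (Fin n) (Fin n) ℝ) *
    Matrix.diagonal (fun j => hB.1.eigenvalues j ^ s) *
    (star hB.1.eigenvectorUnitary : Matrix (Fin n) (Fin n) ℝ)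

lemma psdRPow_apply_diag {n : ℕ} {B : Matrix (Fin n) (Fin n) ℝ} (hB : B.PosSemidef)
    (s : ℝ) (j : Fin n) :
    psdRPow hB s j j =
      ∑ i, ((hB.1.eigenvectorUnitary : Matrix (Fin n) (Fin n) ℝ) j i) ^ 2 *
        hB.1.eigenvalues i ^ s := by
  unfold psdRPow
  rw [Matrix.mul_apply]
  simp only [Matrix.mul_diagonal, Matrix.star_apply, star_trivial]
  refine Finset.sum_congr rfl fun i _ => ?_
  ring

lemma diag_eq_sum {n : ℕ} {B : Matrix (Fin n) (Fin n) ℝ} (hB : B.PosSemidef) (j : Fin n) :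
    B j j =
      ∑ i, ((hB.1.eigenvectorUnitary : Matrix (Fin n) (Fin n) ℝ) j i) ^ 2 *
        hB.1.eigenvalues i := by
  conv_lhs => rw [hB.1.spectral_theorem, Unitary.conjStarAlgAut_apply]
  rw [Matrix.mul_apply]
  simp only [Matrix.mul_diagonal, Unitary.coe_star, Matrix.star_apply, star_trivial, Function.comp_apply,
    RCLike.ofReal_real_eq_id, id_eq]
  refine Finset.sum_congr rfl fun i _ => ?_
  ring

lemma holder_aux {n : ℕ} (w lam : Fin n → ℝ) (hwnn : ∀ i, 0 ≤ w i) (hlnn : ∀ i, 0 ≤ lam i)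
    (k : ℕ) (hk : 2 ≤ k) (p q : ℝ) (hp : 1 < p) (hq : 1 < q) (hpq : 1 / p + 1 / q = 1) :
    (∑ i, w i * lam i ^ (k : ℝ)) ^ q /
      (∑ i, w i * lam i ^ (p * ((k : ℝ) - 1) + 1)) ^ (q / p) ≤ ∑ i, w i * lam i := by
  have hp0 : p ≠ 0 := by positivity
  have hq0 : q ≠ 0 := by positivity
  set e : ℝ := p * ((k : ℝ) - 1) + 1 with he
  set N : ℝ := ∑ i, w i * lam i ^ (k : ℝ) with hN
  set D : ℝ := ∑ i, w i * lam i ^ e with hD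
  set E : ℝ := ∑ i, w i * lam i with hE
  have hNnn : 0 ≤ N := Finset.sum_nonneg fun i _ =>
    mul_nonneg (hwnn i) (Real.rpow_nonneg (hlnn i) _)
  have hDnn : 0 ≤ D := Finset.sum_nonneg fun i _ =>
    mul_nonneg (hwnn i) (Real.rpow_nonneg (hlnn i) _)
  have hEnn : 0 ≤ E := Finset.sum_nonneg fun i _ => mul_nonneg (hwnn i) (hlnn i)
  have hexp : e * (1 / p) + 1 / q = (k : ℝ) := by
    have hpqmul : p + q = p * q := by
      have hp0' : p ≠ 0 := hp0
      field_simp at hpq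
      linarith
    rw [he]
    field_simp
    linear_combination hpqmul
  have hkne : (k : ℝ) ≠ 0 := by positivity
  have hpt : ∀ i, (w i * lam i ^ e) ^ (1 / p) * (w i * lam i) ^ (1 / q)
      = w i * lam i ^ (k : ℝ) := by
    intro i
    rw [Real.mul_rpow (hwnn i) (Real.rpow_nonneg (hlnn i) _),
      Real.mul_rpow (hwnn i) (hlnn i), ← Real.rpow_mul (hlnn i)]
    calc w i ^ (1/p) * lam i ^ (e*(1/p)) * (w i ^ (1/q) * lam i ^ (1/q))
        = (w i ^ (1/p) * w i ^ (1/q)) * (lam i ^ (e*(1/p)) * lam i ^ (1/q)) := by ring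
      _ = w i ^ (1/p + 1/q) * lam i ^ (e*(1/p) + 1/q) := by
          rw [← Real.rpow_add' (hwnn i) (by rw [hpq]; norm_num),
              ← Real.rpow_add' (hlnn i) (by rw [hexp]; exact hkne)]
      _ = w i * lam i ^ (k:ℝ) := by rw [hpq, Real.rpow_one, hexp]
  have hconj : p.HolderConjugate q := Real.holderConjugate_iff.mpr ⟨hp, by rw [← one_div, ← one_div]; exact hpq⟩
  have hH : N ≤ D ^ (1/p) * E ^ (1/q) := by
    calc N = ∑ i, (w i * lam i ^ e) ^ (1/p) * (w i * lam i) ^ (1/q) :=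
          (Finset.sum_congr rfl fun i _ => (hpt i).symm)
      _ ≤ (∑ i, ((w i * lam i ^ e) ^ (1/p)) ^ p) ^ (1/p) *
            (∑ i, ((w i * lam i) ^ (1/q)) ^ q) ^ (1/q) :=
          Real.inner_le_Lp_mul_Lq_of_nonneg Finset.univ hconj
            (fun i _ => Real.rpow_nonneg (mul_nonneg (hwnn i) (Real.rpow_nonneg (hlnn i) _)) _)
            (fun i _ => Real.rpow_nonneg (mul_nonneg (hwnn i) (hlnn i)) _)
      _ = D ^ (1/p) * E ^ (1/q) := by
          congr 2
          · exact Finset.sum_congr rfl fun i _ => by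
              rw [← Real.rpow_mul (mul_nonneg (hwnn i) (Real.rpow_nonneg (hlnn i) _)),
                one_div_mul_cancel hp0, Real.rpow_one]
          · exact Finset.sum_congr rfl fun i _ => by
              rw [← Real.rpow_mul (mul_nonneg (hwnn i) (hlnn i)),
                one_div_mul_cancel hq0, Real.rpow_one]
  rcases eq_or_lt_of_le hDnn with hD0 | hDpos
  · rw [← hD0, Real.zero_rpow (div_ne_zero hq0 hp0), div_zero]
    exact hEnn
  · rw [div_le_iff₀ (Real.rpow_pos_of_pos hDpos _)]
    have h1 : N ^ q ≤ (D ^ (1/p) * E ^ (1/q)) ^ q :=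
      Real.rpow_le_rpow hNnn hH (le_of_lt (lt_trans one_pos hq))
    have h2 : (D ^ (1/p) * E ^ (1/q)) ^ q = D ^ (q/p) * E := by
      rw [Real.mul_rpow (Real.rpow_nonneg hDnn _) (Real.rpow_nonneg hEnn _),
        ← Real.rpow_mul hDnn, ← Real.rpow_mul hEnn, one_div_mul_cancel hq0, Real.rpow_one]
      norm_num [div_eq_mul_inv, mul_comm]
    rw [h2] at h1
    linarith [h1]

theorem stmt_4 {n : ℕ} (G : SimpleGraph (Fin n)) [DecidableRel G.Adj]
    (hedge : G.edgeSet.Nonempty) (k : ℕ) (hk : 2 ≤ k)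
    (p q : ℝ) (hp : 1 < p) (hq : 1 < q) (hpq : 1 / p + 1 / q = 1) (j : Fin n) :
    ((psdRPow (Matrix.posSemidef_self_mul_conjTranspose (G.adjMatrix ℝ)).posSemidef_sqrt
        (k : ℝ)) j j) ^ q /
      ((psdRPow (Matrix.posSemidef_self_mul_conjTranspose (G.adjMatrix ℝ)).posSemidef_sqrt
        (p * ((k : ℝ) - 1) + 1)) j j) ^ (q / p) ≤ vertexEnergy G j := by
  have hB := (Matrix.posSemidef_self_mul_conjTranspose (G.adjMatrix ℝ)).posSemidef_sqrt
  rw [psdRPow_apply_diag, psdRPow_apply_diag]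
  show _ ≤ (Matrix.posSemidef_self_mul_conjTranspose (G.adjMatrix ℝ)).sqrt j j
  rw [diag_eq_sum (Matrix.posSemidef_self_mul_conjTranspose (G.adjMatrix ℝ)).posSemidef_sqrt]
  exact holder_aux _ _ (fun i => sq_nonneg _)
    (fun i => (Matrix.posSemidef_self_mul_conjTranspose
      (G.adjMatrix ℝ)).posSemidef_sqrt.eigenvalues_nonneg i) k hk p q hp hq hpq
end

section
/- Let G be a finite simple graph and v a vertex with deg(v) = 1 whose connected component has at least 3 vertices (i.e., the component of v is not K_2). Then E_G(v) < 1. -/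
open Matrix Finset

section
open scoped ComplexOrder

theorem Matrix.PosSemidef.sqrt_mul_self' {n 𝕜 : Type*} [Fintype n] [DecidableEq n] [RCLike 𝕜]
    {A : Matrix n n 𝕜} (hA : A.PosSemidef) : hA.sqrt * hA.sqrt = A := by
  have hD : diagonal (((↑) ∘ (√·) ∘ hA.1.eigenvalues : n → 𝕜)) *
      diagonal ((↑) ∘ (√·) ∘ hA.1.eigenvalues) = diagonal (RCLike.ofReal ∘ hA.1.eigenvalues) := by
    rw [diagonal_mul_diagonal]
    congr 1
    funext i
    simp only [Function.comp_apply]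
    rw [← RCLike.ofReal_mul, Real.mul_self_sqrt (hA.eigenvalues_nonneg i)]
  have hU : (star hA.1.eigenvectorUnitary : Matrix n n 𝕜) * hA.1.eigenvectorUnitary.1 = 1 :=
    Unitary.coe_star_mul_self _
  conv_rhs => rw [hA.1.spectral_theorem, Unitary.conjStarAlgAut_apply]
  unfold Matrix.PosSemidef.sqrt
  rw [← hD]
  simp only [Matrix.mul_assoc]
  rw [← Matrix.mul_assoc (star _ : Matrix n n 𝕜) _ _, hU, Matrix.one_mul]

theorem Matrix.PosSemidef.sqrt_isHermitian' {n 𝕜 : Type*} [Fintype n] [DecidableEq n] [RCLike 𝕜]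
    {A : Matrix n n 𝕜} (hA : A.PosSemidef) : hA.sqrt.IsHermitian := by
  unfold Matrix.PosSemidef.sqrt Matrix.IsHermitian
  rw [conjTranspose_mul, conjTranspose_mul, diagonal_conjTranspose]
  simp only [Matrix.mul_assoc, star_eq_conjTranspose, conjTranspose_conjTranspose]
  congr 2
  congr 1
  funext i
  simp [RCLike.star_def]

end

theorem stmt_13 {n : ℕ} (G : SimpleGraph (Fin n)) [DecidableRel G.Adj]
    (v : Fin n) (hd : G.degree v = 1)
    (hcomp : 3 ≤ ({u : Fin n | G.Reachable v u} : Set (Fin n)).ncard) :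
    vertexEnergy G v < 1 := by
  set A : Matrix (Fin n) (Fin n) ℝ := G.adjMatrix ℝ with hA
  have hPSD := Matrix.posSemidef_self_mul_conjTranspose A
  set B := hPSD.sqrt with hBdef
  have hBsq : B * B = A * A := by
    have hAH : A * Aᴴ = A * A := by
      rw [hA, conjTranspose_eq_transpose_of_trivial, SimpleGraph.transpose_adjMatrix]
    exact hPSD.sqrt_mul_self'.trans hAH
  have hBsymm : ∀ i j, B i j = B j i := by
    intro i j
    have h := hPSD.sqrt_isHermitian'
    have := congrFun (congrFun h j) i
    simp [Matrix.conjTranspose_apply] at this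
    exact this
  -- the key sum of squares identity
  have hsum : ∑ u, (B u v) ^ 2 = 1 := by
    have h1 : (B * B) v v = (1 : ℝ) := by
      rw [hBsq, SimpleGraph.adjMatrix_mul_self_apply_self, hd]
      norm_num
    calc ∑ u, (B u v) ^ 2 = ∑ u, B v u * B u v := by
          refine Finset.sum_congr rfl fun u _ => ?_
          rw [hBsymm u v]; ring
      _ = (B * B) v v := rfl
      _ = 1 := h1
  -- suppose for contradiction that B v v ≥ 1
  by_contra hcon
  push_neg at hcon
  have hEv : (1 : ℝ) ≤ B v v := hcon
  -- then all off-diagonal entries of column v vanish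
  have hsq1 : (B v v) ^ 2 ≤ 1 := by
    calc (B v v) ^ 2 ≤ ∑ u, (B u v) ^ 2 :=
          Finset.single_le_sum (f := fun u => (B u v) ^ 2)
            (fun u _ => sq_nonneg _) (Finset.mem_univ v)
      _ = 1 := hsum
  have hBvv : B v v = 1 := le_antisymm (by nlinarith) hEv
  have hrest : ∑ u ∈ Finset.univ.erase v, (B u v) ^ 2 = 0 := by
    have h := Finset.add_sum_erase Finset.univ (fun u => (B u v) ^ 2) (Finset.mem_univ v)
    have h' : (B v v) ^ 2 + ∑ u ∈ Finset.univ.erase v, (B u v) ^ 2 = 1 := by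
      rw [← hsum]; exact h
    nlinarith [h']
  have hzero : ∀ u, u ≠ v → B u v = 0 := by
    intro u hu
    have := (Finset.sum_eq_zero_iff_of_nonneg (fun u _ => sq_nonneg (B u v))).mp hrest u
      (Finset.mem_erase.mpr ⟨hu, Finset.mem_univ u⟩)
    exact pow_eq_zero_iff (n := 2) (by norm_num) |>.mp this
  -- hence A² has e_v as column v
  have hA2 : ∀ u, u ≠ v → (A * A) u v = 0 := by
    intro u hu
    rw [← hBsq]
    calc (B * B) u v = ∑ k, B u k * B k v := rfl
      _ = 0 := by
          refine Finset.sum_eq_zero fun k _ => ?_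
          rcases eq_or_ne k v with rfl | hk
          · rw [hzero u hu]; ring
          · rw [hzero k hk]; ring
  -- combinatorics: v has a unique neighbor w
  obtain ⟨w, hw⟩ : ∃ w, G.neighborFinset v = {w} := by
    rw [← SimpleGraph.card_neighborFinset_eq_degree] at hd
    exact Finset.card_eq_one.mp hd
  have hadj_v : ∀ u, G.Adj v u ↔ u = w := by
    intro u
    rw [← SimpleGraph.mem_neighborFinset, hw, Finset.mem_singleton]
  have hvw : G.Adj v w := (hadj_v w).mpr rfl
  have hwv : w ≠ v := fun h => G.irrefl (h ▸ hvw)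
  -- w's only neighbor is v
  have hadj_w : ∀ u, G.Adj w u → u = v := by
    intro u hu
    by_contra huv
    have h2 : (A * A) u v = 0 := hA2 u huv
    have : (A * A) u v = ∑ k, A u k * A k v := rfl
    rw [this] at h2
    have hterm : ∀ k ∈ Finset.univ, (0:ℝ) ≤ A u k * A k v := by
      intro k _
      have h1 : (0:ℝ) ≤ A u k := by simp [hA, SimpleGraph.adjMatrix_apply]; positivity
      have h2 : (0:ℝ) ≤ A k v := by simp [hA, SimpleGraph.adjMatrix_apply]; positivity
      exact mul_nonneg h1 h2
    have hw0 : A u w * A w v = 0 :=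
      (Finset.sum_eq_zero_iff_of_nonneg hterm).mp h2 w (Finset.mem_univ w)
    have hA_uw : A u w = 1 := by simp [hA, SimpleGraph.adjMatrix_apply, hu.symm]
    have hA_wv : A w v = 1 := by simp [hA, SimpleGraph.adjMatrix_apply, hvw.symm]
    rw [hA_uw, hA_wv] at hw0
    norm_num at hw0
  -- reachable set is {v, w}
  have hreach : ∀ a, (a = v ∨ a = w) → ∀ u, G.Walk a u → (u = v ∨ u = w) := by
    intro a ha u p
    induction p with
    | nil => exact ha
    | @cons x y z hxy p ih =>
        apply ih
        rcases ha with rfl | rfl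
        · exact Or.inr ((hadj_v y).mp hxy)
        · exact Or.inl (hadj_w y hxy)
  have hsub : ({u : Fin n | G.Reachable v u} : Set (Fin n)) ⊆ {v, w} := by
    intro u hu
    obtain ⟨p⟩ := hu
    rcases hreach v (Or.inl rfl) u p with h | h
    · exact Or.inl h
    · exact Or.inr h
  have hle : ({u : Fin n | G.Reachable v u} : Set (Fin n)).ncard ≤ 2 := by
    calc ({u : Fin n | G.Reachable v u} : Set (Fin n)).ncard
        ≤ ({v, w} : Set (Fin n)).ncard := Set.ncard_le_ncard hsub (Set.toFinite _)
      _ ≤ 2 := by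
          rw [Set.ncard_pair (fun h => hwv h.symm)]
  omega
end
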